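/- Let (k1,l1), (k2,l2) ∈ ℤ² with gcd(k1,l1) = gcd(k2,l2) = 1 and k1·l2 − k2·l1 > 0. Assume that no point of ℤ² lies in the interior of the triangle in ℝ² with vertices (0,0), (k1,l1) and (k1+k2, l1+l2). Then k1·l2 − k2·l1 = gcd(k1+k2, l1+l2). Consequently, f(k1,l1) + f(k2,l2) + k2·l1 = f(k1+k2, l1+l2), where f(k,l) := (k·l − k − l − gcd(k,l) + 2)/2. -/

import Mathlib

/-- The signed count `f(k,l) = (k·l − k − l − gcd(k,l) + 2)/2` of lattice points inside the
triangle with vertices `(0,0)`, `(0,l)`, `(k,l)`. -/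
noncomputable def latticeF (k l : ℤ) : ℚ :=
  ((k * l - k - l - (Int.gcd k l : ℤ) + 2 : ℤ) : ℚ) / 2

/-- Auxiliary: a point whose "barycentric" functionals lie strictly between the bounds is in
the interior of the triangle. -/
lemma aux_interior (k1 l1 k2 l2 p1 p2 : ℝ) (hd : 0 < k1*l2 - k2*l1)
    (hq1 : 0 < p2*k1 - p1*l1) (hq2 : p2*k1 - p1*l1 < p1*l2 - p2*k2)
    (hq3 : p1*l2 - p2*k2 < k1*l2 - k2*l1) :
    (p1, p2) ∈ interior (convexHull ℝ {((0:ℝ),(0:ℝ)), (k1,l1), (k1+k2, l1+l2)}) := by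
  set X : Set (ℝ × ℝ) := {((0:ℝ),(0:ℝ)), (k1,l1), (k1+k2, l1+l2)} with hX
  have hUopen : IsOpen {q : ℝ × ℝ | 0 < q.2*k1 - q.1*l1 ∧ (q.2*k1 - q.1*l1 < q.1*l2 - q.2*k2 ∧
      q.1*l2 - q.2*k2 < k1*l2 - k2*l1)} := by
    apply IsOpen.and
    · exact isOpen_lt continuous_const (by fun_prop)
    · exact IsOpen.and (isOpen_lt (by fun_prop) (by fun_prop))
        (isOpen_lt (by fun_prop) continuous_const)
  have hUsub : {q : ℝ × ℝ | 0 < q.2*k1 - q.1*l1 ∧ (q.2*k1 - q.1*l1 < q.1*l2 - q.2*k2 ∧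
      q.1*l2 - q.2*k2 < k1*l2 - k2*l1)} ⊆ convexHull ℝ X := by
    rintro q ⟨h1, h2, h3⟩
    set d := k1*l2 - k2*l1 with hdd
    set t := (q.2*k1 - q.1*l1)/d with htd
    set s := (q.1*l2 - q.2*k2)/d with hsd
    have ht0 : 0 < t := div_pos h1 hd
    have hts : t < s := by rw [htd, hsd]; gcongr
    have hs1 : s < 1 := (div_lt_one hd).2 h3
    have hs0 : 0 < s := ht0.trans hts
    have hs0' : s ≠ 0 := ne_of_gt hs0
    have hd0 : d ≠ 0 := ne_of_gt hd
    have hcx : Convex ℝ (convexHull ℝ X) := convex_convexHull ℝ X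
    have hA : ((0:ℝ),(0:ℝ)) ∈ convexHull ℝ X := subset_convexHull ℝ X (by simp [hX])
    have hB : ((k1:ℝ),(l1:ℝ)) ∈ convexHull ℝ X := subset_convexHull ℝ X (by simp [hX])
    have hC : ((k1+k2:ℝ),(l1+l2:ℝ)) ∈ convexHull ℝ X := subset_convexHull ℝ X (by simp [hX])
    have hm : ((s-t)/s) • ((k1:ℝ),(l1:ℝ)) + (t/s) • ((k1+k2:ℝ),(l1+l2:ℝ)) ∈ convexHull ℝ X :=
      hcx hB hC (div_nonneg (by linarith) hs0.le) (div_nonneg ht0.le hs0.le) (by field_simp; ring)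
    have hq : (1-s) • ((0:ℝ),(0:ℝ)) + s • (((s-t)/s) • ((k1:ℝ),(l1:ℝ)) + (t/s) • ((k1+k2:ℝ),(l1+l2:ℝ))) ∈ convexHull ℝ X :=
      hcx hA hm (by linarith) (by linarith) (by ring)
    have c1 : s * ((s-t)/s) = s - t := by field_simp
    have c2 : s * (t/s) = t := by field_simp
    have heq : (1-s) • ((0:ℝ),(0:ℝ)) + s • (((s-t)/s) • ((k1:ℝ),(l1:ℝ)) + (t/s) • ((k1+k2:ℝ),(l1+l2:ℝ))) = q := by
      rw [smul_add, smul_smul, smul_smul, c1, c2]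
      have e1 : (s-t)*k1 + t*(k1+k2) = q.1 := by
        have hd' : k1*l2 - k2*l1 ≠ 0 := hd0
        rw [htd, hsd, hdd]; linear_combination q.1 * mul_inv_cancel₀ hd'
      have e2 : (s-t)*l1 + t*(l1+l2) = q.2 := by
        have hd' : k1*l2 - k2*l1 ≠ 0 := hd0
        rw [htd, hsd, hdd]; linear_combination q.2 * mul_inv_cancel₀ hd'
      have : ((1-s)*0 + ((s-t)*k1 + t*(k1+k2)), (1-s)*0 + ((s-t)*l1 + t*(l1+l2))) = q := by
        rw [e1, e2]; simp
      exact this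
    rw [← heq]; exact hq
  exact interior_maximal hUsub hUopen ⟨hq1, hq2, hq3⟩

/-- If `(k1,l1)` and `(k2,l2)` are primitive integer vectors with
`k1·l2 − k2·l1 > 0` such that the triangle with vertices `(0,0)`, `(k1,l1)`,
`(k1+k2,l1+l2)` has no interior lattice point, then `k1·l2 − k2·l1 = gcd(k1+k2,l1+l2)`
and consequently `f(k1,l1) + f(k2,l2) + k2·l1 = f(k1+k2,l1+l2)`. -/
theorem det_eq_gcd_of_empty_triangle (k1 l1 k2 l2 : ℤ)
    (h1 : Int.gcd k1 l1 = 1) (h2 : Int.gcd k2 l2 = 1)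
    (hdet : 0 < k1 * l2 - k2 * l1)
    (hempty : ∀ p : ℤ × ℤ, ((p.1 : ℝ), (p.2 : ℝ)) ∉
      interior (convexHull ℝ {((0 : ℝ), (0 : ℝ)), ((k1 : ℝ), (l1 : ℝ)),
        (((k1 : ℝ) + (k2 : ℝ)), ((l1 : ℝ) + (l2 : ℝ)))})) :
    k1 * l2 - k2 * l1 = (Int.gcd (k1 + k2) (l1 + l2) : ℤ) ∧
    latticeF k1 l1 + latticeF k2 l2 + ((k2 * l1 : ℤ) : ℚ)
      = latticeF (k1 + k2) (l1 + l2) := by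
  have hmain : k1 * l2 - k2 * l1 = (Int.gcd (k1 + k2) (l1 + l2) : ℤ) := by
    set d : ℤ := k1 * l2 - k2 * l1 with hdd
    have hd0 : d ≠ 0 := ne_of_gt hdet
    have hgd : (Int.gcd (k1 + k2) (l1 + l2) : ℤ) ∣ d := by
      have hgk : (Int.gcd (k1 + k2) (l1 + l2) : ℤ) ∣ (k1 + k2) := Int.gcd_dvd_left _ _
      have hgl : (Int.gcd (k1 + k2) (l1 + l2) : ℤ) ∣ (l1 + l2) := Int.gcd_dvd_right _ _
      have hrw : d = k1 * (l1 + l2) - (k1 + k2) * l1 := by rw [hdd]; ring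
      rw [hrw]
      exact dvd_sub (hgl.mul_left k1) (hgk.mul_right l1)
    obtain ⟨u, v, huv⟩ : ∃ u v : ℤ, u * k2 + v * l2 = 1 := by
      obtain ⟨u, v, h⟩ := Int.isCoprime_iff_gcd_eq_one.mpr h2
      exact ⟨u, v, h⟩
    set y0 : ℤ := u * k1 + v * l1 with hy0
    set y : ℤ := y0 % d with hyd
    have hy_nonneg : 0 ≤ y := Int.emod_nonneg y0 hd0
    have hy_lt : y < d := Int.emod_lt_of_pos y0 hdet
    have hk : d ∣ y * k2 - k1 := by
      refine ⟨-v - y0 / d * k2, ?_⟩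
      rw [hyd, Int.emod_def, hy0, hdd]
      linear_combination k1 * huv
    have hl : d ∣ y * l2 - l1 := by
      refine ⟨u - y0 / d * l2, ?_⟩
      rw [hyd, Int.emod_def, hy0, hdd]
      linear_combination l1 * huv
    by_cases hcase : d ∣ y + 1
    · have hdk : d ∣ k1 + k2 := by
        have hrw : k1 + k2 = (y + 1) * k2 - (y * k2 - k1) := by ring
        rw [hrw]
        exact dvd_sub (hcase.mul_right k2) hk
      have hdl : d ∣ l1 + l2 := by
        have hrw : l1 + l2 = (y + 1) * l2 - (y * l2 - l1) := by ring
        rw [hrw]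
        exact dvd_sub (hcase.mul_right l2) hl
      exact Int.dvd_antisymm (le_of_lt hdet) (Int.natCast_nonneg _) (Int.dvd_coe_gcd hdk hdl) hgd
    · exfalso
      have hy_pos : 0 < y := by
        rcases lt_or_eq_of_le hy_nonneg with h | h
        · exact h
        · exfalso
          rw [← h] at hk hl
          have hk1 : d ∣ k1 := by simpa using hk
          have hl1 : d ∣ l1 := by simpa using hl
          have hone : d ∣ ((Int.gcd k1 l1 : ℤ)) := Int.dvd_coe_gcd hk1 hl1
          rw [h1] at hone
          exact hcase ((by simpa using hone : d ∣ (1:ℤ)).trans (one_dvd _))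
      have hy_lt' : y < d - 1 := by
        rcases lt_or_eq_of_le (by omega : y + 1 ≤ d) with h | h
        · omega
        · exact absurd (h ▸ dvd_refl (y+1)) hcase
      obtain ⟨c1, hc1⟩ := hk
      obtain ⟨c2, hc2⟩ := hl
      have hT : (l1 + c2) * k1 - (k1 + c1) * l1 = y := by
        have hmul : d * ((l1 + c2) * k1 - (k1 + c1) * l1) = d * y := by
          linear_combination l1 * hc1 - k1 * hc2
        exact mul_left_cancel₀ hd0 hmul
      have hS : (k1 + c1) * l2 - (l1 + c2) * k2 = d - 1 := by
        have hmul : d * ((k1 + c1) * l2 - (l1 + c2) * k2) = d * (d - 1) := by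
          linear_combination k2 * hc2 - l2 * hc1
        exact mul_left_cancel₀ hd0 hmul
      have hI1 : (0:ℤ) < (l1 + c2) * k1 - (k1 + c1) * l1 := by rw [hT]; exact hy_pos
      have hI2 : (l1 + c2) * k1 - (k1 + c1) * l1 < (k1 + c1) * l2 - (l1 + c2) * k2 := by
        rw [hT, hS]; exact hy_lt'
      have hI3 : (k1 + c1) * l2 - (l1 + c2) * k2 < k1 * l2 - k2 * l1 := by
        rw [hS, ← hdd]; omega
      exact hempty (k1 + c1, l1 + c2)
        (aux_interior (k1:ℝ) (l1:ℝ) (k2:ℝ) (l2:ℝ) ((k1 + c1 : ℤ) : ℝ) ((l1 + c2 : ℤ) : ℝ)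
          (by exact_mod_cast hdet) (by exact_mod_cast hI1) (by exact_mod_cast hI2)
          (by exact_mod_cast hI3))
  refine ⟨hmain, ?_⟩
  simp only [latticeF, h1, h2, ← hmain]
  push_cast
  ring
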